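/- Let Q̄ be a double quiver and for each vertex i let V_i be a finite-dimensional vector space over a field k of characteristic 0. Let Rep = ⊕_{a ∈ Q̄₁} Hom(V_{s(a)}, V_{t(a)}) be the representation space, and for a closed path p = a₁⋯a_n define tr(p) ∈ O(Rep) by tr(p)(f) = trace(f_{a_n} ∘ ⋯ ∘ f_{a₁}), and tr(e_i) = dim V_i. Then tr(p) depends only on the cyclic equivalence class of p, and the induced algebra map tr: S(N) → O(Rep) from the free commutative algebra on cyclic paths intertwines the necklace Lie bracket br⁻ with the constant-coefficient Poisson bracket on O(Rep) determined on linear coordinate functions by the trace pairings: {x^a_{uv}, x^{ā}_{wz}} = δ_{uz} δ_{vw} for a ∈ Q₁ (and the antisymmetric extension), all other brackets of coordinates zero. -/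

import Mathlib

open scoped Classical

variable {V E : Type*}

/-- Source map of the double quiver: the arrows are `E ⊕ E`, with `Sum.inl a` the original
arrow `a : s a → t a` and `Sum.inr a` its double `ā : t a → s a`. -/
def dsrc (s t : E → V) : E ⊕ E → V
  | Sum.inl a => s a
  | Sum.inr a => t a

/-- Target map of the double quiver. -/
def dtgt (s t : E → V) : E ⊕ E → V
  | Sum.inl a => t a
  | Sum.inr a => s a

/-- The canonical antisymmetric pairing `⟨-,-⟩` on arrows of the double quiver:
`⟨a, ā⟩ = 1 = -⟨ā, a⟩` for an original arrow `a`, and all other pairings vanish. -/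
def dpair [DecidableEq E] : E ⊕ E → E ⊕ E → ℤ
  | Sum.inl a, Sum.inr b => if a = b then 1 else 0
  | Sum.inr a, Sum.inl b => if a = b then -1 else 0
  | Sum.inl _, Sum.inl _ => 0
  | Sum.inr _, Sum.inr _ => 0

/-- A (nonempty) closed path in the double quiver, encoded as a periodic sequence of
composable arrows: `f i` is the `(i mod len)`-th arrow of the path. -/
structure RawLoop (s t : E → V) : Type _ where
  len : ℕ
  len_pos : 0 < len
  f : ℕ → E ⊕ E
  periodic : ∀ i, f (i + len) = f i
  closed : ∀ i, dtgt s t (f i) = dsrc s t (f (i + 1))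

/-- Two closed paths are identified when they differ by a cyclic rotation; the quotient
`Quot (RotRel s t)` is the set of (nonconstant) cyclic paths. -/
def RotRel (s t : E → V) (p q : RawLoop s t) : Prop :=
  p.len = q.len ∧ ∃ k, ∀ i, q.f i = p.f (i + k)

/-- A coordinate function on the representation space of the double quiver: a matrix entry
`x^d_{u v}` of the component at the arrow `d`, where `u` indexes a basis of the vector
space at the target of `d` and `v` a basis of the vector space at the source. -/
abbrev RCoord (s t : E → V) (nV : V → ℕ) :=
  Σ d : E ⊕ E, Fin (nV (dtgt s t d)) × Fin (nV (dsrc s t d))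

/-- Compatibility of dimensions along a closed path (cyclically). -/
theorem stepEq (s t : E → V) (nV : V → ℕ) (p : RawLoop s t) (i : Fin p.len) :
    nV (dsrc s t (p.f (((i : ℕ) + 1) % p.len))) = nV (dtgt s t (p.f (i : ℕ))) := by
  have h1 : p.f (((i : ℕ) + 1) % p.len) = p.f ((i : ℕ) + 1) := by
    rcases Nat.lt_or_ge ((i : ℕ) + 1) p.len with h | h
    · rw [Nat.mod_eq_of_lt h]
    · have hi : (i : ℕ) + 1 = p.len := by have := i.isLt; omega
      rw [hi, Nat.mod_self]
      have h0 := p.periodic 0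
      simpa using h0.symm
  rw [h1, ← p.closed (i : ℕ)]

/-- The trace function of a closed path `p = a₁⋯a_m`, as a polynomial in the matrix
coordinates: `tr(p) = ∑_u ∏_i x^{a_i}_{u_{i+1} u_i}`, i.e. the function sending a
representation `f` to `trace (f_{a_m} ∘ ⋯ ∘ f_{a_1})`. -/
noncomputable def trPoly (K : Type*) [CommRing K] (s t : E → V) (nV : V → ℕ)
    (p : RawLoop s t) : MvPolynomial (RCoord s t nV) K :=
  ∑ u : (∀ i : Fin p.len, Fin (nV (dsrc s t (p.f (i : ℕ))))),
    ∏ i : Fin p.len,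
      MvPolynomial.X
        ⟨p.f (i : ℕ),
          (Fin.cast (stepEq s t nV p i) (u ⟨((i : ℕ) + 1) % p.len, Nat.mod_lt _ i.pos⟩),
            u i)⟩

/-- The concatenated sequence `a_{i+1} ⋯ a_{i-1} b_{j+1} ⋯ b_{j-1}` appearing in the
classical necklace bracket. -/
def concatSeq (s t : E → V) (p q : RawLoop s t) (i j : ℕ) : ℕ → E ⊕ E := fun r =>
  if r % (p.len - 1 + (q.len - 1)) < p.len - 1 then
    p.f (i + 1 + r % (p.len - 1 + (q.len - 1)))
  else q.f (j + 1 + (r % (p.len - 1 + (q.len - 1)) - (p.len - 1)))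

/-- The trace function of the term `e_{t(a_i)} a_{i+1}⋯a_{i-1} b_{j+1}⋯b_{j-1}` of the
classical necklace bracket: the constant `dim V_{t(a_i)}` when both loops have length one,
and the trace function of the concatenated loop otherwise. -/
noncomputable def brMTermPoly (K : Type*) [CommRing K] (s t : E → V) (nV : V → ℕ)
    (p q : RawLoop s t) (i j : ℕ) : MvPolynomial (RCoord s t nV) K :=
  if hL : p.len - 1 + (q.len - 1) = 0 then
    MvPolynomial.C ((nV (dtgt s t (p.f i)) : K))
  else if h : ∀ r, dtgt s t (concatSeq s t p q i j r) = dsrc s t (concatSeq s t p q i j (r + 1)) then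
    trPoly K s t nV
      { len := p.len - 1 + (q.len - 1)
        len_pos := Nat.pos_of_ne_zero hL
        f := concatSeq s t p q i j
        periodic := fun r => by simp only [concatSeq, Nat.add_mod_right]
        closed := h }
  else 0


section Helpers

/-- `x % L` described by a case split when `x < 2L`; lets `omega` handle variable moduli. -/
theorem nmod2 {x L : ℕ} (hL : 0 < L) (h : x < 2 * L) :
    x % L = if x < L then x else x - L := by
  split
  · exact Nat.mod_eq_of_lt ‹_›
  · rw [Nat.mod_eq_sub_mod (le_of_not_gt ‹_›), Nat.mod_eq_of_lt (by omega)]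

theorem periodic_mod {α : Type*} {g : ℕ → α} {L : ℕ} (hL : 0 < L)
    (hg : ∀ x, g (x + L) = g x) (x : ℕ) : g (x % L) = g x := by
  conv_rhs => rw [← Nat.mod_add_div x L]
  generalize x / L = k
  induction k with
  | zero => simp
  | succ n ih => rw [Nat.mul_succ, ← Nat.add_assoc, hg, ih]

variable {V E : Type*} (s t : E → V)

theorem RawLoop.f_mod (p : RawLoop s t) (x : ℕ) : p.f (x % p.len) = p.f x :=
  periodic_mod p.len_pos p.periodic x

/-- dimension function along a loop. -/
theorem RawLoop.n_mod (p : RawLoop s t) (nV : V → ℕ) (x : ℕ) :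
    nV (dsrc s t (p.f (x % p.len))) = nV (dsrc s t (p.f x)) := by
  rw [p.f_mod]

theorem RawLoop.closed' (p : RawLoop s t) (nV : V → ℕ) (x : ℕ) :
    nV (dsrc s t (p.f ((x + 1) % p.len))) = nV (dtgt s t (p.f x)) := by
  rw [p.f_mod, ← p.closed]

end Helpers

section XXdef

variable {V E : Type*} (s t : E → V) (nV : V → ℕ) (K : Type*) [CommRing K]

/-- matrix-entry variable with ℕ indices; zero out of range. -/
noncomputable def XX (d : E ⊕ E) (a b : ℕ) : MvPolynomial (RCoord s t nV) K :=
  if h : a < nV (dtgt s t d) ∧ b < nV (dsrc s t d) then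
    MvPolynomial.X ⟨d, (⟨a, h.1⟩, ⟨b, h.2⟩)⟩ else 0

theorem XX_of_lt {d : E ⊕ E} {a b : ℕ} (ha : a < nV (dtgt s t d)) (hb : b < nV (dsrc s t d)) :
    XX s t nV K d a b = MvPolynomial.X ⟨d, (⟨a, ha⟩, ⟨b, hb⟩)⟩ := dif_pos ⟨ha, hb⟩

/-- index box over which a loop's trace sums. -/
def LBox (s t : E → V) (nV : V → ℕ) (p : RawLoop s t) : Finset (Fin p.len → ℕ) :=
  Fintype.piFinset fun i => Finset.range (nV (dsrc s t (p.f (i : ℕ))))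

noncomputable def LTerm (p : RawLoop s t) (u : Fin p.len → ℕ) :
    MvPolynomial (RCoord s t nV) K :=
  ∏ i ∈ Finset.range p.len,
    XX s t nV K (p.f i) (u ⟨(i + 1) % p.len, Nat.mod_lt _ p.len_pos⟩)
      (u ⟨i % p.len, Nat.mod_lt _ p.len_pos⟩)

theorem trPoly_eq (p : RawLoop s t) :
    trPoly K s t nV p = ∑ u ∈ LBox s t nV p, LTerm s t nV K p u := by
  rw [trPoly]
  refine Finset.sum_bij' (i := fun u _ => fun k => (u k : ℕ))
    (j := fun w hw => fun i => ⟨w i, by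
      have := Fintype.mem_piFinset.1 hw i
      simpa [Finset.mem_range] using this⟩) ?_ ?_ ?_ ?_ ?_
  · intro u _
    exact Fintype.mem_piFinset.2 fun i => Finset.mem_range.2 (u i).isLt
  · intro w hw; exact Finset.mem_univ _
  · intro u _; funext i; simp
  · intro w hw; funext i; simp
  · intro u _
    rw [LTerm, ← Fin.prod_univ_eq_prod_range (fun x : ℕ =>
      XX s t nV K (p.f x) ((fun k => (u k : ℕ)) ⟨(x + 1) % p.len, Nat.mod_lt _ p.len_pos⟩)
        ((fun k => (u k : ℕ)) ⟨x % p.len, Nat.mod_lt _ p.len_pos⟩))]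
    refine Finset.prod_congr rfl fun i _ => ?_
    have h1 : ((i : ℕ) + 1) % p.len % p.len = ((i : ℕ) + 1) % p.len := Nat.mod_mod_of_dvd _ dvd_rfl
    have hlt1 : (u ⟨((i : ℕ) + 1) % p.len, Nat.mod_lt _ p.len_pos⟩ : ℕ) <
        nV (dtgt s t (p.f (i : ℕ))) := by
      have := (u ⟨((i : ℕ) + 1) % p.len, Nat.mod_lt _ p.len_pos⟩).isLt
      exact lt_of_lt_of_eq this (RawLoop.closed' s t p nV (i : ℕ))
    have ha2 : ((fun k => (u k : ℕ)) ⟨((i:ℕ) + 1) % p.len, Nat.mod_lt _ p.len_pos⟩) <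
        nV (dtgt s t (p.f (i : ℕ))) := hlt1
    have hb2 : ((fun k => (u k : ℕ)) ⟨(i:ℕ) % p.len, Nat.mod_lt _ p.len_pos⟩) <
        nV (dsrc s t (p.f (i : ℕ))) := by
      simpa [Nat.mod_eq_of_lt i.isLt] using (u ⟨(i:ℕ) % p.len, Nat.mod_lt _ p.len_pos⟩).isLt
    rw [XX_of_lt s t nV K ha2 hb2]
    have hidx : (⟨(i : ℕ) % p.len, Nat.mod_lt _ p.len_pos⟩ : Fin p.len) = i :=
      Fin.ext (Nat.mod_eq_of_lt i.isLt)
    congr 1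
    refine Sigma.ext rfl (heq_of_eq ?_)
    simp only [Prod.mk.injEq]
    exact ⟨Fin.ext (by simp), Fin.ext (congrArg (fun k => (u k : ℕ)) hidx.symm)⟩
end XXdef
section Rot

theorem prod_range_shift1 {M : Type*} [CommMonoid M] (g : ℕ → M) (L : ℕ) (hL : 0 < L)
    (hg : ∀ x, g (x + L) = g x) :
    ∏ x ∈ Finset.range L, g (x + 1) = ∏ x ∈ Finset.range L, g x := by
  obtain ⟨n, rfl⟩ : ∃ n, L = n + 1 := ⟨L - 1, by omega⟩
  rw [Finset.prod_range_succ, Finset.prod_range_succ' g]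
  congr 1
  simpa using hg 0

theorem prod_range_shift {M : Type*} [CommMonoid M] (g : ℕ → M) (L : ℕ) (hL : 0 < L)
    (hg : ∀ x, g (x + L) = g x) (m : ℕ) :
    ∏ x ∈ Finset.range L, g (x + m) = ∏ x ∈ Finset.range L, g x := by
  induction m with
  | zero => simp
  | succ n ih =>
      have key := prod_range_shift1 (fun x => g (x + n)) L hL (fun x => by
        have : x + n + L = x + L + n := by omega
        simpa [this] using congrArg g (by omega : x + L + n = (x + n) + L) ▸ hg (x + n))
      calc ∏ x ∈ Finset.range L, g (x + (n + 1))
          = ∏ x ∈ Finset.range L, g ((x + 1) + n) :=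
            Finset.prod_congr rfl fun x _ => congrArg g (by omega)
        _ = ∏ x ∈ Finset.range L, g (x + n) := key
        _ = _ := ih

theorem trPoly_rot {V E : Type*} (s t : E → V) (nV : V → ℕ) (K : Type*) [CommRing K]
    (p q : RawLoop s t) (hL : p.len = q.len) (m : ℕ) (hm : ∀ r, q.f r = p.f (r + m)) :
    trPoly K s t nV p = trPoly K s t nV q := by
  have hLq : q.len = p.len := hL.symm
  have hLpos : 0 < p.len := p.len_pos
  set L := p.len with hLdef
  set c := L - m % L with hcdef
  have harith : ∀ x : ℕ, (x + c + m) % L = x % L := by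
    intro x
    have h1 := Nat.mod_add_div m L
    have h2 : m % L < L := Nat.mod_lt _ hLpos
    have h3 : x + c + m = x + L * (m / L + 1) := by
      have : L * (m / L + 1) = L * (m / L) + L := by ring
      omega
    rw [h3, Nat.add_mul_mod_self_left]
  rw [trPoly_eq, trPoly_eq]
  refine Finset.sum_nbij'
    (i := fun u => fun k : Fin q.len => u ⟨((k : ℕ) + m) % L, Nat.mod_lt _ hLpos⟩)
    (j := fun w => fun k : Fin L => w ⟨((k : ℕ) + c) % q.len, Nat.mod_lt _ q.len_pos⟩)
    ?_ ?_ ?_ ?_ ?_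
  · intro u hu
    refine Fintype.mem_piFinset.2 fun k => Finset.mem_range.2 ?_
    have h1 := Finset.mem_range.1 (Fintype.mem_piFinset.1 hu ⟨((k : ℕ) + m) % L, Nat.mod_lt _ hLpos⟩)
    calc u ⟨((k : ℕ) + m) % L, Nat.mod_lt _ hLpos⟩
        < nV (dsrc s t (p.f (((k : ℕ) + m) % L))) := h1
      _ = nV (dsrc s t (q.f (k : ℕ))) := by rw [p.f_mod, ← hm]
  · intro w hw
    refine Fintype.mem_piFinset.2 fun k => Finset.mem_range.2 ?_
    have h1 := Finset.mem_range.1 (Fintype.mem_piFinset.1 hw ⟨((k : ℕ) + c) % q.len, Nat.mod_lt _ q.len_pos⟩)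
    calc w ⟨((k : ℕ) + c) % q.len, Nat.mod_lt _ q.len_pos⟩
        < nV (dsrc s t (q.f (((k : ℕ) + c) % q.len))) := h1
      _ = nV (dsrc s t (p.f (k : ℕ))) := by
          rw [q.f_mod, hm ((k : ℕ) + c), ← p.f_mod s t (↑k + c + m), harith,
            Nat.mod_eq_of_lt k.isLt]
  · intro u hu
    funext k
    refine congrArg u (Fin.ext ?_)
    show (((k : ℕ) + c) % q.len + m) % L = (k : ℕ)
    rw [hLq, Nat.mod_add_mod, harith, Nat.mod_eq_of_lt k.isLt]
  · intro w hw
    funext k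
    refine congrArg w (Fin.ext ?_)
    obtain ⟨kv, hk⟩ := k
    show ((kv + m) % L + c) % q.len = kv
    have hk' : kv < L := by omega
    rw [hLq, Nat.mod_add_mod]
    have : kv + m + c = kv + c + m := by omega
    rw [this, harith, Nat.mod_eq_of_lt hk']
  · intro u hu
    set G : ℕ → MvPolynomial (RCoord s t nV) K := fun y =>
      XX s t nV K (p.f y) (u ⟨(y + 1) % L, Nat.mod_lt _ hLpos⟩)
        (u ⟨y % L, Nat.mod_lt _ hLpos⟩) with hGdef
    have hGper : ∀ y, G (y + L) = G y := by
      intro y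
      have e1 : (y + L + 1) % L = (y + 1) % L := by
        rw [Nat.add_right_comm, Nat.add_mod_right]
      have e2 : (y + L) % L = y % L := Nat.add_mod_right y L
      simp only [hGdef, e1, e2, show p.f (y + L) = p.f y from p.periodic y]
    have hleft : LTerm s t nV K p u = ∏ x ∈ Finset.range L, G x := rfl
    have hright : LTerm s t nV K q (fun k : Fin q.len => u ⟨((k : ℕ) + m) % L, Nat.mod_lt _ hLpos⟩)
        = ∏ x ∈ Finset.range L, G (x + m) := by
      rw [LTerm, show Finset.range q.len = Finset.range L from by rw [hLq]]
      refine Finset.prod_congr rfl fun x hx => ?_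
      have hx' : x < L := Finset.mem_range.1 hx
      have e1 : ((x + 1) % q.len + m) % L = (x + m + 1) % L := by
        rw [hLq, Nat.mod_add_mod]
        exact congrArg (· % L) (by omega)
      have e2 : (x % q.len + m) % L = (x + m) % L := by
        rw [hLq, Nat.mod_add_mod]
      simp only [hGdef, hm x, e1, e2]
    rw [hleft, hright, prod_range_shift G L hLpos hGper m]

end Rot
section Bracket

variable {V E : Type*} [DecidableEq E] {s t : E → V} {nV : V → ℕ}
    {K : Type*} [CommRing K]
    (P : MvPolynomial (RCoord s t nV) K →ₗ[K] MvPolynomial (RCoord s t nV) K →ₗ[K]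
      MvPolynomial (RCoord s t nV) K)

theorem P_one_right (hder : ∀ f g h, P f (g * h) = g * P f h + P f g * h)
    (f : MvPolynomial (RCoord s t nV) K) : P f 1 = 0 := by
  have h := hder f 1 1
  rw [mul_one, one_mul, mul_one] at h
  exact (add_eq_left.mp h.symm)

theorem P_prod_right (hder : ∀ f g h, P f (g * h) = g * P f h + P f g * h)
    (f : MvPolynomial (RCoord s t nV) K) {ι : Type*} [DecidableEq ι] (sJ : Finset ι)
    (g : ι → MvPolynomial (RCoord s t nV) K) :
    P f (∏ j ∈ sJ, g j) = ∑ j ∈ sJ, (∏ j' ∈ sJ.erase j, g j') * P f (g j) := by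
  classical
  induction sJ using Finset.induction_on with
  | empty => simpa using P_one_right P hder f
  | insert a sJ' ha ih =>
      rw [Finset.prod_insert ha, hder, ih, Finset.mul_sum, Finset.sum_insert ha,
        Finset.erase_insert ha, add_comm]
      congr 1
      · exact mul_comm _ _
      · refine Finset.sum_congr rfl fun j hj => ?_
        rw [Finset.erase_insert_of_ne (by rintro rfl; exact ha hj),
          Finset.prod_insert (fun h => ha (Finset.mem_of_mem_erase h)), mul_assoc]

theorem P_prod_left (hskew : ∀ f g, P f g = - P g f)
    (hder : ∀ f g h, P f (g * h) = g * P f h + P f g * h)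
    (f : MvPolynomial (RCoord s t nV) K) {ι : Type*} [DecidableEq ι] (sI : Finset ι)
    (g : ι → MvPolynomial (RCoord s t nV) K) :
    P (∏ i ∈ sI, g i) f = ∑ i ∈ sI, (∏ i' ∈ sI.erase i, g i') * P (g i) f := by
  rw [hskew, P_prod_right P hder f sI g, ← Finset.sum_neg_distrib]
  refine Finset.sum_congr rfl fun i _ => ?_
  rw [hskew f (g i), mul_neg, neg_neg]

theorem P_prod_prod (hskew : ∀ f g, P f g = - P g f)
    (hder : ∀ f g h, P f (g * h) = g * P f h + P f g * h)
    {ι κ : Type*} [DecidableEq ι] [DecidableEq κ] (sI : Finset ι) (sJ : Finset κ)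
    (f : ι → MvPolynomial (RCoord s t nV) K) (g : κ → MvPolynomial (RCoord s t nV) K) :
    P (∏ i ∈ sI, f i) (∏ j ∈ sJ, g j) =
      ∑ i ∈ sI, ∑ j ∈ sJ,
        (∏ i' ∈ sI.erase i, f i') * ((∏ j' ∈ sJ.erase j, g j') * P (f i) (g j)) := by
  rw [P_prod_left P hskew hder _ sI f]
  refine Finset.sum_congr rfl fun i _ => ?_
  rw [P_prod_right P hder _ sJ g, Finset.mul_sum]

theorem Pval (hskew : ∀ f g, P f g = - P g f)
    (hval : ∀ (a : E) (u : Fin (nV (t a))) (v : Fin (nV (s a)))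
        (w : Fin (nV (s a))) (z : Fin (nV (t a))),
      P (MvPolynomial.X ⟨Sum.inl a, (u, v)⟩) (MvPolynomial.X ⟨Sum.inr a, (w, z)⟩) =
        MvPolynomial.C (if u = z ∧ v = w then (1 : K) else 0))
    (hzero : ∀ (d₁ d₂ : E ⊕ E), dpair d₁ d₂ = 0 →
      ∀ (uv : Fin (nV (dtgt s t d₁)) × Fin (nV (dsrc s t d₁)))
        (wz : Fin (nV (dtgt s t d₂)) × Fin (nV (dsrc s t d₂))),
      P (MvPolynomial.X ⟨d₁, uv⟩) (MvPolynomial.X ⟨d₂, wz⟩) = 0)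
    (d₁ d₂ : E ⊕ E) (a : Fin (nV (dtgt s t d₁))) (b : Fin (nV (dsrc s t d₁)))
    (a' : Fin (nV (dtgt s t d₂))) (b' : Fin (nV (dsrc s t d₂))) :
    P (MvPolynomial.X ⟨d₁, (a, b)⟩) (MvPolynomial.X ⟨d₂, (a', b')⟩) =
      (dpair d₁ d₂ : ℤ) •
        MvPolynomial.C (if (a : ℕ) = (b' : ℕ) ∧ (b : ℕ) = (a' : ℕ) then (1 : K) else 0) := by
  match d₁, d₂ with
  | Sum.inl e, Sum.inl e' =>
      rw [hzero _ _ (by simp [dpair]) (a, b) (a', b')]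
      simp [dpair]
  | Sum.inr e, Sum.inr e' =>
      rw [hzero _ _ (by simp [dpair]) (a, b) (a', b')]
      simp [dpair]
  | Sum.inl e, Sum.inr e' =>
      by_cases h : e = e'
      · subst h
        rw [hval e a b a' b']
        simp [dpair, Fin.ext_iff]
        split_ifs with h1 h2 h3
        · rfl
        · exact (h2 ⟨congrArg Fin.val h1.1, congrArg Fin.val h1.2⟩).elim
        · exact (h1 ⟨Fin.ext h3.1, Fin.ext h3.2⟩).elim
        · rfl
      · rw [hzero _ _ (by simp [dpair, h]) (a, b) (a', b')]
        simp [dpair, h]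
  | Sum.inr e, Sum.inl e' =>
      by_cases h : e = e'
      · subst h
        rw [hskew, hval e a' b' a b]
        have hc : ((a' : ℕ) = (b : ℕ) ∧ (b' : ℕ) = (a : ℕ)) ↔
            ((a : ℕ) = (b' : ℕ) ∧ (b : ℕ) = (a' : ℕ)) := by
          constructor <;> rintro ⟨h1, h2⟩ <;> exact ⟨h2.symm, h1.symm⟩
        simp only [dpair, if_pos rfl, Fin.ext_iff]
        simp only [↓reduceIte]
        split_ifs with h1 h2 h3
        · simp
        · exact (h2 (hc.1 ⟨congrArg Fin.val h1.1, congrArg Fin.val h1.2⟩)).elim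
        · exact (h1 ⟨Fin.ext (hc.2 h3).1, Fin.ext (hc.2 h3).2⟩).elim
        · simp
      · rw [hzero _ _ (by simp [dpair, h]) (a, b) (a', b')]
        simp [dpair, h]

theorem PXXval (hskew : ∀ f g, P f g = - P g f)
    (hval : ∀ (a : E) (u : Fin (nV (t a))) (v : Fin (nV (s a)))
        (w : Fin (nV (s a))) (z : Fin (nV (t a))),
      P (MvPolynomial.X ⟨Sum.inl a, (u, v)⟩) (MvPolynomial.X ⟨Sum.inr a, (w, z)⟩) =
        MvPolynomial.C (if u = z ∧ v = w then (1 : K) else 0))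
    (hzero : ∀ (d₁ d₂ : E ⊕ E), dpair d₁ d₂ = 0 →
      ∀ (uv : Fin (nV (dtgt s t d₁)) × Fin (nV (dsrc s t d₁)))
        (wz : Fin (nV (dtgt s t d₂)) × Fin (nV (dsrc s t d₂))),
      P (MvPolynomial.X ⟨d₁, uv⟩) (MvPolynomial.X ⟨d₂, wz⟩) = 0)
    (d₁ d₂ : E ⊕ E) {a b a' b' : ℕ}
    (ha : a < nV (dtgt s t d₁)) (hb : b < nV (dsrc s t d₁))
    (ha' : a' < nV (dtgt s t d₂)) (hb' : b' < nV (dsrc s t d₂)) :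
    P (XX s t nV K d₁ a b) (XX s t nV K d₂ a' b') =
      (dpair d₁ d₂ : ℤ) • MvPolynomial.C (if a = b' ∧ b = a' then (1 : K) else 0) := by
  rw [XX_of_lt s t nV K ha hb, XX_of_lt s t nV K ha' hb',
    Pval P hskew hval hzero d₁ d₂ ⟨a, ha⟩ ⟨b, hb⟩ ⟨a', ha'⟩ ⟨b', hb'⟩]

end Bracket
section Concat

variable {V E : Type*} (s t : E → V)

theorem concatSeq_lt {p q : RawLoop s t} {i j r : ℕ} (hr : r < p.len - 1) :
    concatSeq s t p q i j r = p.f (i + 1 + r) := by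
  have hrM : r < p.len - 1 + (q.len - 1) := by omega
  simp only [concatSeq, Nat.mod_eq_of_lt hrM, if_pos hr]

theorem concatSeq_ge {p q : RawLoop s t} {i j r : ℕ} (hr1 : p.len - 1 ≤ r)
    (hr2 : r < p.len - 1 + (q.len - 1)) :
    concatSeq s t p q i j r = q.f (j + 1 + (r - (p.len - 1))) := by
  simp only [concatSeq, Nat.mod_eq_of_lt hr2]
  rw [if_neg (show ¬ r < p.len - 1 by omega)]

/-- Index arithmetic for cutting a loop of length `L` open at position `i`. -/
theorem idxlem (L i : ℕ) (hL : 0 < L) (hi : i < L) :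
    (∀ k, k < L → k ≠ i →
      (k + (L - 1) - i) % L < L - 1 ∧ (i + 1 + (k + (L - 1) - i) % L) % L = k) ∧
    (∀ r, r < L - 1 →
      (i + 1 + r) % L ≠ i ∧ ((i + 1 + r) % L + (L - 1) - i) % L = r) := by
  constructor
  · intro k hk hki
    have e1 : (k + (L - 1) - i) % L = if k + (L - 1) - i < L then k + (L - 1) - i
        else k + (L - 1) - i - L := nmod2 hL (by omega)
    constructor
    · rw [e1]; split <;> omega
    · rw [e1]
      split <;> (rw [nmod2 hL (by omega)]; split <;> omega)
  · intro r hr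
    have e1 : (i + 1 + r) % L = if i + 1 + r < L then i + 1 + r else i + 1 + r - L :=
      nmod2 hL (by omega)
    constructor
    · rw [e1]; split <;> omega
    · rw [e1]
      split <;> (rw [nmod2 hL (by omega)]; split <;> omega)

theorem concat_closed {p q : RawLoop s t} {i j : ℕ} (hi : i < p.len) (hj : j < q.len)
    (hST : dsrc s t (q.f j) = dtgt s t (p.f i))
    (hTS : dtgt s t (q.f j) = dsrc s t (p.f i))
    (hM : p.len - 1 + (q.len - 1) ≠ 0) :
    ∀ r, dtgt s t (concatSeq s t p q i j r) = dsrc s t (concatSeq s t p q i j (r + 1)) := by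
  intro r
  have hMpos : 0 < p.len - 1 + (q.len - 1) := Nat.pos_of_ne_zero hM
  have hLp := p.len_pos
  have hLq := q.len_pos
  set M := p.len - 1 + (q.len - 1) with hMdef
  have hper : concatSeq s t p q i j (r + 1) = concatSeq s t p q i j ((r + 1) % M) := by
    have := periodic_mod (g := concatSeq s t p q i j) hMpos
      (fun x => by simp only [concatSeq, hMdef, Nat.add_mod_right]) (r + 1)
    exact this.symm
  have hper0 : concatSeq s t p q i j r = concatSeq s t p q i j (r % M) := by
    exact (periodic_mod (g := concatSeq s t p q i j) hMpos
      (fun x => by simp only [concatSeq, hMdef, Nat.add_mod_right]) r).symm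
  rw [hper, hper0]
  have hρ : r % M < M := Nat.mod_lt _ hMpos
  have hρ' : (r + 1) % M = if r % M + 1 < M then r % M + 1 else 0 := by
    rw [← Nat.mod_add_mod, nmod2 hMpos (by omega)]
    have := Nat.mod_lt r hMpos
    split <;> omega
  set ρ := r % M with hρdef
  -- case analysis
  rcases Nat.lt_or_ge (ρ + 1) (p.len - 1) with h1 | h1
  · -- internal p part
    rw [concatSeq_lt s t (by omega), hρ', if_pos (by omega), concatSeq_lt s t h1,
      show i + 1 + (ρ + 1) = (i + 1 + ρ) + 1 by omega]
    exact p.closed _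
  rcases Nat.lt_or_ge ρ (p.len - 1) with h2 | h2
  · -- ρ + 1 = p.len - 1 : last p arrow
    have hρΛ : ρ + 1 = p.len - 1 := by omega
    have key : dtgt s t (p.f (i + 1 + ρ)) = dsrc s t (q.f (j + 1)) := by
      have e : i + 1 + ρ = i + (p.len - 1) := by omega
      calc dtgt s t (p.f (i + 1 + ρ)) = dsrc s t (p.f (i + (p.len - 1) + 1)) := by
            rw [e]; exact p.closed _
        _ = dsrc s t (p.f i) := by
            rw [show i + (p.len - 1) + 1 = i + p.len by omega, p.periodic]
        _ = dtgt s t (q.f j) := hTS.symm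
        _ = dsrc s t (q.f (j + 1)) := q.closed j
    rcases Nat.lt_or_ge (ρ + 1) M with h3 | h3
    · -- q part is nonempty
      rw [concatSeq_lt s t h2, hρ', if_pos h3, concatSeq_ge s t (by omega) h3,
        show j + 1 + (ρ + 1 - (p.len - 1)) = j + 1 by omega]
      exact key
    · -- q.len = 1, wrap to start of p part
      have hq1 : q.len = 1 := by omega
      have h0Λ : 0 < p.len - 1 := by omega
      rw [concatSeq_lt s t h2, hρ', if_neg (by omega), concatSeq_lt s t h0Λ]
      calc dtgt s t (p.f (i + 1 + ρ)) = dsrc s t (q.f (j + 1)) := key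
        _ = dsrc s t (q.f j) := by rw [show j + 1 = j + q.len by omega, q.periodic]
        _ = dtgt s t (p.f i) := hST
        _ = dsrc s t (p.f (i + 1)) := p.closed i
        _ = dsrc s t (p.f (i + 1 + 0)) := by rw [Nat.add_zero]
  · -- ρ in q part
    rcases Nat.lt_or_ge (ρ + 1) M with h3 | h3
    · -- internal q part
      rw [concatSeq_ge s t h2 (by omega), hρ', if_pos h3, concatSeq_ge s t (by omega) h3,
        show j + 1 + (ρ + 1 - (p.len - 1)) = (j + 1 + (ρ - (p.len - 1))) + 1 by omega]
      exact q.closed _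
    · -- last q arrow, wrap around
      have hρM : ρ + 1 = M := by omega
      have key : dtgt s t (q.f (j + 1 + (ρ - (p.len - 1)))) = dsrc s t (p.f (i + 1)) := by
        calc dtgt s t (q.f (j + 1 + (ρ - (p.len - 1))))
            = dsrc s t (q.f (j + 1 + (ρ - (p.len - 1)) + 1)) := q.closed _
          _ = dsrc s t (q.f j) := by
              rw [show j + 1 + (ρ - (p.len - 1)) + 1 = j + q.len by omega, q.periodic]
          _ = dtgt s t (p.f i) := hST
          _ = dsrc s t (p.f (i + 1)) := p.closed i
      rcases Nat.lt_or_ge 0 (p.len - 1) with h4 | h4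
      · rw [concatSeq_ge s t h2 (by omega), hρ', if_neg (by omega), concatSeq_lt s t h4]
        rw [show i + 1 + 0 = i + 1 by omega]
        exact key
      · -- p.len = 1
        have hp1 : p.len = 1 := by omega
        rw [concatSeq_ge s t h2 (by omega), hρ', if_neg (by omega),
          concatSeq_ge s t (by omega) (by omega)]
        calc dtgt s t (q.f (j + 1 + (ρ - (p.len - 1))))
            = dsrc s t (p.f (i + 1)) := key
          _ = dsrc s t (p.f i) := by rw [show i + 1 = i + p.len by omega, p.periodic]
          _ = dtgt s t (q.f j) := hTS.symm
          _ = dsrc s t (q.f (j + 1)) := q.closed j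
          _ = dsrc s t (q.f (j + 1 + (0 - (p.len - 1)))) := by norm_num

end Concat
section MainIJ

theorem fapp {n : ℕ} (g : Fin n → ℕ) {a b : ℕ} (ha : a < n) (hb : b < n) (h : a = b) :
    g ⟨a, ha⟩ = g ⟨b, hb⟩ := by subst h; rfl

theorem erase_prod_eq {Mo : Type*} [CommMonoid Mo] (L i : ℕ) (hL : 0 < L) (hi : i < L)
    (g : ℕ → Mo) :
    ∏ k ∈ (Finset.range L).erase i, g k = ∏ r ∈ Finset.range (L - 1), g ((i + 1 + r) % L) := by
  obtain ⟨h1, h2⟩ := idxlem L i hL hi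
  symm
  refine Finset.prod_nbij' (i := fun r => (i + 1 + r) % L) (j := fun k => (k + (L - 1) - i) % L)
    ?_ ?_ ?_ ?_ ?_
  · intro r hr
    have hr' := Finset.mem_range.1 hr
    exact Finset.mem_erase.2 ⟨(h2 r hr').1, Finset.mem_range.2 (Nat.mod_lt _ hL)⟩
  · intro k hk
    obtain ⟨hki, hkL⟩ := Finset.mem_erase.1 hk
    exact Finset.mem_range.2 (h1 k (Finset.mem_range.1 hkL) hki).1
  · intro r hr
    exact (h2 r (Finset.mem_range.1 hr)).2
  · intro k hk
    obtain ⟨hki, hkL⟩ := Finset.mem_erase.1 hk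
    exact (h1 k (Finset.mem_range.1 hkL) hki).2
  · intro r _
    rfl

variable {V E : Type*} [DecidableEq E]

theorem term_eq {V E : Type*} [DecidableEq E] (s t : E → V) (nV : V → ℕ) (K : Type*)
    [CommRing K] (p q : RawLoop s t) {i j : ℕ} (hi : i < p.len) (hj : j < q.len)
    (hM : p.len - 1 + (q.len - 1) ≠ 0)
    (u : Fin p.len → ℕ) (w : Fin q.len → ℕ)
    (hδ1 : u ⟨(i + 1) % p.len, Nat.mod_lt _ p.len_pos⟩ = w ⟨j % q.len, Nat.mod_lt _ q.len_pos⟩)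
    (hδ2 : u ⟨i % p.len, Nat.mod_lt _ p.len_pos⟩ = w ⟨(j + 1) % q.len, Nat.mod_lt _ q.len_pos⟩)
    (φ : Fin (p.len - 1 + (q.len - 1)) → ℕ)
    (hφ : ∀ (r : ℕ) (hr : r < p.len - 1 + (q.len - 1)),
      φ ⟨r, hr⟩ = if r < p.len - 1 then u ⟨(i + 1 + r) % p.len, Nat.mod_lt _ p.len_pos⟩
        else w ⟨(j + 1 + (r - (p.len - 1))) % q.len, Nat.mod_lt _ q.len_pos⟩) :
    (∏ i' ∈ (Finset.range p.len).erase i, XX s t nV K (p.f i')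
        (u ⟨(i' + 1) % p.len, Nat.mod_lt _ p.len_pos⟩)
        (u ⟨i' % p.len, Nat.mod_lt _ p.len_pos⟩)) *
      (∏ j' ∈ (Finset.range q.len).erase j, XX s t nV K (q.f j')
        (w ⟨(j' + 1) % q.len, Nat.mod_lt _ q.len_pos⟩)
        (w ⟨j' % q.len, Nat.mod_lt _ q.len_pos⟩)) =
    ∏ r ∈ Finset.range (p.len - 1 + (q.len - 1)),
      XX s t nV K (concatSeq s t p q i j r)
        (φ ⟨(r + 1) % (p.len - 1 + (q.len - 1)), Nat.mod_lt _ (Nat.pos_of_ne_zero hM)⟩)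
        (φ ⟨r % (p.len - 1 + (q.len - 1)), Nat.mod_lt _ (Nat.pos_of_ne_zero hM)⟩) := by
  have hLp := p.len_pos
  have hLq := q.len_pos
  have hMpos : 0 < p.len - 1 + (q.len - 1) := Nat.pos_of_ne_zero hM
  rw [erase_prod_eq p.len i hLp hi, erase_prod_eq q.len j hLq hj, Finset.prod_range_add]
  congr 1
  · -- the p part
    refine Finset.prod_congr rfl fun r hr => ?_
    have hrΛ : r < p.len - 1 := Finset.mem_range.1 hr
    have harrow : concatSeq s t p q i j r = p.f ((i + 1 + r) % p.len) :=
      (concatSeq_lt s t hrΛ).trans (p.f_mod s t (i + 1 + r)).symm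
    have hsnd : φ ⟨r % (p.len - 1 + (q.len - 1)), Nat.mod_lt _ hMpos⟩ =
        u ⟨(i + 1 + r) % p.len % p.len, Nat.mod_lt _ hLp⟩ := by
      have e : r % (p.len - 1 + (q.len - 1)) = r := Nat.mod_eq_of_lt (by omega)
      rw [fapp φ (Nat.mod_lt _ hMpos) (by omega) e, hφ r (by omega), if_pos hrΛ]
      exact fapp u (Nat.mod_lt _ hLp) (Nat.mod_lt _ hLp)
        (Nat.mod_mod_of_dvd _ dvd_rfl).symm
    have hfst : φ ⟨(r + 1) % (p.len - 1 + (q.len - 1)), Nat.mod_lt _ hMpos⟩ =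
        u ⟨((i + 1 + r) % p.len + 1) % p.len, Nat.mod_lt _ hLp⟩ := by
      have hval : ((i + 1 + r) % p.len + 1) % p.len = (i + 1 + r + 1) % p.len :=
        Nat.mod_add_mod _ _ _
      rcases Nat.lt_or_ge (r + 1) (p.len - 1) with h1 | h1
      · have e : (r + 1) % (p.len - 1 + (q.len - 1)) = r + 1 := Nat.mod_eq_of_lt (by omega)
        rw [fapp φ (Nat.mod_lt _ hMpos) (by omega) e, hφ (r + 1) (by omega), if_pos h1]
        exact fapp u (Nat.mod_lt _ hLp) (Nat.mod_lt _ hLp)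
          (show (i + 1 + (r + 1)) % p.len = ((i + 1 + r) % p.len + 1) % p.len from by
            rw [hval]; exact congrArg (· % p.len) (by omega))
      · -- r + 1 = p.len - 1
        have hrΛ1 : r + 1 = p.len - 1 := by omega
        have hgoalval : ((i + 1 + r) % p.len + 1) % p.len = i % p.len := by
          rw [hval, show i + 1 + r + 1 = i + p.len by omega, Nat.add_mod_right]
        rcases Nat.lt_or_ge (p.len - 1) (p.len - 1 + (q.len - 1)) with h2 | h2
        · -- q part nonempty
          rw [fapp φ (Nat.mod_lt _ hMpos) (by omega)
              (show (r + 1) % (p.len - 1 + (q.len - 1)) = p.len - 1 by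
                rw [Nat.mod_eq_of_lt (by omega)]; omega),
            hφ (p.len - 1) (by omega), if_neg (lt_irrefl _),
            fapp w (Nat.mod_lt _ hLq) (Nat.mod_lt _ hLq)
              (show (j + 1 + (p.len - 1 - (p.len - 1))) % q.len = (j + 1) % q.len by
                rw [Nat.sub_self, Nat.add_zero]),
            ← hδ2]
          exact (fapp u (Nat.mod_lt _ hLp) (Nat.mod_lt _ hLp) hgoalval).symm
        · -- q.len = 1
          have hq1 : q.len = 1 := by omega
          rw [fapp φ (Nat.mod_lt _ hMpos) hMpos
              (show (r + 1) % (p.len - 1 + (q.len - 1)) = 0 by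
                rw [show r + 1 = p.len - 1 + (q.len - 1) by omega, Nat.mod_self]),
            hφ 0 hMpos, if_pos (by omega),
            fapp u (Nat.mod_lt _ hLp) (Nat.mod_lt _ hLp)
              (show (i + 1 + 0) % p.len = (i + 1) % p.len by rw [Nat.add_zero]),
            hδ1, fapp w (Nat.mod_lt _ hLq) (Nat.mod_lt _ hLq)
              (show j % q.len = (j + 1) % q.len by rw [hq1, Nat.mod_one, Nat.mod_one]),
            ← hδ2]
          exact (fapp u (Nat.mod_lt _ hLp) (Nat.mod_lt _ hLp) hgoalval).symm
    rw [harrow, hsnd, hfst]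
  · -- the q part
    refine Finset.prod_congr rfl fun x hx => ?_
    have hxΛ : x < q.len - 1 := Finset.mem_range.1 hx
    have harrow : concatSeq s t p q i j (p.len - 1 + x) = q.f ((j + 1 + x) % q.len) := by
      rw [concatSeq_ge s t (by omega) (by omega), Nat.add_sub_cancel_left, q.f_mod]
    have hsnd : φ ⟨(p.len - 1 + x) % (p.len - 1 + (q.len - 1)), Nat.mod_lt _ hMpos⟩ =
        w ⟨(j + 1 + x) % q.len % q.len, Nat.mod_lt _ hLq⟩ := by
      have e : (p.len - 1 + x) % (p.len - 1 + (q.len - 1)) = p.len - 1 + x :=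
        Nat.mod_eq_of_lt (by omega)
      rw [fapp φ (Nat.mod_lt _ hMpos) (by omega) e, hφ (p.len - 1 + x) (by omega),
        if_neg (by omega)]
      exact fapp w (Nat.mod_lt _ hLq) (Nat.mod_lt _ hLq)
        (by rw [Nat.add_sub_cancel_left, Nat.mod_mod_of_dvd _ dvd_rfl])
    have hfst : φ ⟨(p.len - 1 + x + 1) % (p.len - 1 + (q.len - 1)), Nat.mod_lt _ hMpos⟩ =
        w ⟨((j + 1 + x) % q.len + 1) % q.len, Nat.mod_lt _ hLq⟩ := by
      have hval : ((j + 1 + x) % q.len + 1) % q.len = (j + 1 + x + 1) % q.len :=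
        Nat.mod_add_mod _ _ _
      rcases Nat.lt_or_ge (x + 1) (q.len - 1) with h1 | h1
      · have e : (p.len - 1 + x + 1) % (p.len - 1 + (q.len - 1)) = p.len - 1 + x + 1 :=
          Nat.mod_eq_of_lt (by omega)
        rw [fapp φ (Nat.mod_lt _ hMpos) (by omega) e, hφ (p.len - 1 + x + 1) (by omega),
          if_neg (by omega)]
        refine (fapp w (Nat.mod_lt _ hLq) (Nat.mod_lt _ hLq) ?_).symm
        rw [hval]
        exact congrArg (· % q.len) (by omega)
      · -- x + 1 = q.len - 1, wrap around
        have hgoalval : ((j + 1 + x) % q.len + 1) % q.len = j % q.len := by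
          rw [hval, show j + 1 + x + 1 = j + q.len by omega, Nat.add_mod_right]
        have h0M : (p.len - 1 + x + 1) % (p.len - 1 + (q.len - 1)) = 0 := by
          rw [show p.len - 1 + x + 1 = p.len - 1 + (q.len - 1) by omega, Nat.mod_self]
        rcases Nat.lt_or_ge 0 (p.len - 1) with h2 | h2
        · rw [fapp φ (Nat.mod_lt _ hMpos) hMpos h0M, hφ 0 hMpos, if_pos h2,
            fapp u (Nat.mod_lt _ hLp) (Nat.mod_lt _ hLp)
              (show (i + 1 + 0) % p.len = (i + 1) % p.len by rw [Nat.add_zero]),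
            hδ1]
          exact (fapp w (Nat.mod_lt _ hLq) (Nat.mod_lt _ hLq) hgoalval).symm
        · -- p.len = 1
          have hp1 : p.len = 1 := by omega
          rw [fapp φ (Nat.mod_lt _ hMpos) hMpos h0M, hφ 0 hMpos, if_neg (by omega),
            fapp w (Nat.mod_lt _ hLq) (Nat.mod_lt _ hLq)
              (show (j + 1 + (0 - (p.len - 1))) % q.len = (j + 1) % q.len by
                rw [show 0 - (p.len - 1) = 0 by omega, Nat.add_zero]),
            ← hδ2, fapp u (Nat.mod_lt _ hLp) (Nat.mod_lt _ hLp)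
              (show i % p.len = (i + 1) % p.len by rw [hp1, Nat.mod_one, Nat.mod_one]),
            hδ1]
          exact (fapp w (Nat.mod_lt _ hLq) (Nat.mod_lt _ hLq) hgoalval).symm
    rw [harrow, hsnd, hfst]

theorem main_ij (s t : E → V) (nV : V → ℕ) (K : Type*) [CommRing K]
    (p q : RawLoop s t) {i j : ℕ} (hi : i < p.len) (hj : j < q.len)
    (hST : dsrc s t (q.f j) = dtgt s t (p.f i))
    (hTS : dtgt s t (q.f j) = dsrc s t (p.f i)) :
    (∑ u ∈ LBox s t nV p, ∑ w ∈ LBox s t nV q,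
      (∏ i' ∈ (Finset.range p.len).erase i, XX s t nV K (p.f i')
          (u ⟨(i' + 1) % p.len, Nat.mod_lt _ p.len_pos⟩)
          (u ⟨i' % p.len, Nat.mod_lt _ p.len_pos⟩)) *
        ((∏ j' ∈ (Finset.range q.len).erase j, XX s t nV K (q.f j')
            (w ⟨(j' + 1) % q.len, Nat.mod_lt _ q.len_pos⟩)
            (w ⟨j' % q.len, Nat.mod_lt _ q.len_pos⟩)) *
          MvPolynomial.C
            (if u ⟨(i + 1) % p.len, Nat.mod_lt _ p.len_pos⟩ =
                  w ⟨j % q.len, Nat.mod_lt _ q.len_pos⟩ ∧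
                u ⟨i % p.len, Nat.mod_lt _ p.len_pos⟩ =
                  w ⟨(j + 1) % q.len, Nat.mod_lt _ q.len_pos⟩
              then (1 : K) else 0))) = brMTermPoly K s t nV p q i j := by
  classical
  have hLp := p.len_pos
  have hLq := q.len_pos
  have hbp : ∀ u ∈ LBox s t nV p, ∀ k : Fin p.len, u k < nV (dsrc s t (p.f (k : ℕ))) :=
    fun u hu k => Finset.mem_range.1 (Fintype.mem_piFinset.1 hu k)
  have hbq : ∀ w ∈ LBox s t nV q, ∀ k : Fin q.len, w k < nV (dsrc s t (q.f (k : ℕ))) :=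
    fun w hw k => Finset.mem_range.1 (Fintype.mem_piFinset.1 hw k)
  by_cases hM : p.len - 1 + (q.len - 1) = 0
  · -- both loops have length one
    have hLp1 : p.len = 1 := by omega
    have hLq1 : q.len = 1 := by omega
    have hi0 : i = 0 := by omega
    have hj0 : j = 0 := by omega
    subst hi0; subst hj0
    have hep : (Finset.range p.len).erase 0 = ∅ := by
      rw [hLp1, Finset.range_one, Finset.erase_singleton]
    have heq' : (Finset.range q.len).erase 0 = ∅ := by
      rw [hLq1, Finset.range_one, Finset.erase_singleton]
    rw [brMTermPoly, dif_pos hM]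
    simp only [hep, heq', Finset.prod_empty, one_mul]
    have hip : (⟨(0 + 1) % p.len, Nat.mod_lt _ p.len_pos⟩ : Fin p.len) =
        ⟨0 % p.len, Nat.mod_lt _ p.len_pos⟩ :=
      Fin.ext (show (0 + 1) % p.len = 0 % p.len by rw [hLp1])
    have hjq : (⟨(0 + 1) % q.len, Nat.mod_lt _ q.len_pos⟩ : Fin q.len) =
        ⟨0 % q.len, Nat.mod_lt _ q.len_pos⟩ :=
      Fin.ext (show (0 + 1) % q.len = 0 % q.len by rw [hLq1])
    simp only [hip, hjq, and_self]
    -- dimension chain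
    have hpp : p.f 1 = p.f 0 := by
      have := p.periodic 0
      rwa [Nat.zero_add, hLp1] at this
    have hdim : nV (dsrc s t (p.f 0)) = nV (dtgt s t (p.f 0)) := by
      rw [p.closed 0, Nat.zero_add, hpp]
    have hdimq : nV (dsrc s t (q.f 0)) = nV (dtgt s t (p.f 0)) := by rw [hST]
    have hsum : ∀ u ∈ LBox s t nV p,
        (∑ w ∈ LBox s t nV q, MvPolynomial.C
          (if u ⟨0 % p.len, Nat.mod_lt _ p.len_pos⟩ = w ⟨0 % q.len, Nat.mod_lt _ q.len_pos⟩
            then (1 : K) else 0)) = (1 : MvPolynomial (RCoord s t nV) K) := by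
      intro u hu
      have hcond : ∀ w : Fin q.len → ℕ,
          (u ⟨0 % p.len, Nat.mod_lt _ p.len_pos⟩ = w ⟨0 % q.len, Nat.mod_lt _ q.len_pos⟩) ↔
            (w = fun _ => u ⟨0 % p.len, Nat.mod_lt _ p.len_pos⟩) := by
        intro w
        constructor
        · intro h
          funext k
          have hk : k = ⟨0 % q.len, Nat.mod_lt _ q.len_pos⟩ := Fin.ext (by omega)
          rw [hk, ← h]
        · intro h; rw [h]
      simp only [apply_ite MvPolynomial.C, map_one, map_zero]
      calc (∑ w ∈ LBox s t nV q,
            if u ⟨0 % p.len, Nat.mod_lt _ p.len_pos⟩ = w ⟨0 % q.len, Nat.mod_lt _ q.len_pos⟩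
              then (1 : MvPolynomial (RCoord s t nV) K) else 0)
          = ∑ w ∈ LBox s t nV q,
            if w = (fun _ => u ⟨0 % p.len, Nat.mod_lt _ p.len_pos⟩) then 1 else 0 := by
            refine Finset.sum_congr rfl fun w _ => if_congr (hcond w) rfl rfl
        _ = 1 := by
            rw [Finset.sum_ite_eq' (LBox s t nV q)
              (fun _ => u ⟨0 % p.len, Nat.mod_lt _ p.len_pos⟩) (fun _ => 1), if_pos]
            refine Fintype.mem_piFinset.2 fun k => Finset.mem_range.2 ?_
            have hk0 : (k : ℕ) = 0 := by have := k.isLt; omega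
            have := hbp u hu ⟨0 % p.len, Nat.mod_lt _ p.len_pos⟩
            calc u ⟨0 % p.len, Nat.mod_lt _ p.len_pos⟩
                < nV (dsrc s t (p.f (0 % p.len))) := this
              _ = nV (dsrc s t (q.f (k : ℕ))) := by
                  rw [hk0, p.f_mod, hdim, ← hdimq]
    rw [Finset.sum_congr rfl hsum, Finset.sum_const, nsmul_eq_mul, mul_one]
    have hcard : (LBox s t nV p).card = nV (dsrc s t (p.f 0)) := by
      rw [LBox, Fintype.card_piFinset]
      calc ∏ k : Fin p.len, (Finset.range (nV (dsrc s t (p.f (k : ℕ))))).card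
          = ∏ _k : Fin p.len, nV (dsrc s t (p.f 0)) := by
            refine Finset.prod_congr rfl fun k _ => ?_
            rw [Finset.card_range]
            have hk0 : (k : ℕ) = 0 := by have := k.isLt; omega
            rw [hk0]
        _ = nV (dsrc s t (p.f 0)) ^ p.len := by
            rw [Finset.prod_const, Finset.card_univ, Fintype.card_fin]
        _ = _ := by rw [hLp1, pow_one]
    rw [hcard, hdim]
    exact (MvPolynomial.C_eq_coe_nat _).symm
  · -- the concatenated loop case
    have hMpos : 0 < p.len - 1 + (q.len - 1) := Nat.pos_of_ne_zero hM
    obtain ⟨hxp1, hxp2⟩ := idxlem p.len i hLp hi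
    obtain ⟨hxq1, hxq2⟩ := idxlem q.len j hLq hj
    have hclosed := concat_closed s t hi hj hST hTS hM
    rw [brMTermPoly, dif_neg hM, dif_pos hclosed, trPoly_eq]
    simp only [apply_ite MvPolynomial.C, map_one, map_zero, mul_ite, mul_one, mul_zero]
    rw [← Finset.sum_product', ← Finset.sum_filter]
    -- dimension facts for special positions
    have hdΛ : nV (dsrc s t (concatSeq s t p q i j ((p.len - 1) % (p.len - 1 + (q.len - 1))))) =
        nV (dsrc s t (p.f i)) := by
      rcases Nat.lt_or_ge (p.len - 1) (p.len - 1 + (q.len - 1)) with h | h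
      · rw [Nat.mod_eq_of_lt h, concatSeq_ge s t le_rfl h, Nat.sub_self, Nat.add_zero,
          ← q.closed j, hTS]
      · -- q.len = 1
        have hq1 : q.len = 1 := by omega
        have h0 : (p.len - 1) % (p.len - 1 + (q.len - 1)) = 0 := by
          rw [show p.len - 1 + (q.len - 1) = p.len - 1 by omega, Nat.mod_self]
        calc nV (dsrc s t (concatSeq s t p q i j ((p.len - 1) % (p.len - 1 + (q.len - 1)))))
            = nV (dsrc s t (p.f (i + 1 + 0))) := by rw [h0, concatSeq_lt s t (by omega)]
          _ = nV (dtgt s t (p.f i)) := by rw [Nat.add_zero, ← p.closed i]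
          _ = nV (dsrc s t (q.f j)) := by rw [← hST]
          _ = nV (dsrc s t (q.f (j + 1))) := by
              rw [show j + 1 = j + q.len by omega, q.periodic]
          _ = nV (dtgt s t (q.f j)) := by rw [← q.closed j]
          _ = nV (dsrc s t (p.f i)) := by rw [hTS]
    have hd0 : nV (dsrc s t (concatSeq s t p q i j (0 % (p.len - 1 + (q.len - 1))))) =
        nV (dsrc s t (q.f j)) := by
      rw [Nat.zero_mod]
      rcases Nat.lt_or_ge 0 (p.len - 1) with h | h
      · rw [concatSeq_lt s t h, Nat.add_zero, ← p.closed i, ← hST]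
      · -- p.len = 1
        have hp1 : p.len = 1 := by omega
        calc nV (dsrc s t (concatSeq s t p q i j 0))
            = nV (dsrc s t (q.f (j + 1 + (0 - (p.len - 1))))) := by
              rw [concatSeq_ge s t (by omega) (by omega)]
          _ = nV (dsrc s t (q.f (j + 1))) := by
              rw [show j + 1 + (0 - (p.len - 1)) = j + 1 by omega]
          _ = nV (dtgt s t (q.f j)) := by rw [← q.closed j]
          _ = nV (dsrc s t (p.f i)) := by rw [hTS]
          _ = nV (dsrc s t (p.f (i + 1))) := by
              rw [show i + 1 = i + p.len by omega, p.periodic]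
          _ = nV (dtgt s t (p.f i)) := by rw [← p.closed i]
          _ = nV (dsrc s t (q.f j)) := by rw [hST]
    refine Finset.sum_nbij'
      (i := fun x => fun r : Fin (p.len - 1 + (q.len - 1)) =>
        if (r : ℕ) < p.len - 1 then x.1 ⟨(i + 1 + (r : ℕ)) % p.len, Nat.mod_lt _ hLp⟩
        else x.2 ⟨(j + 1 + ((r : ℕ) - (p.len - 1))) % q.len, Nat.mod_lt _ hLq⟩)
      (j := fun v =>
        (fun k : Fin p.len =>
          if (k : ℕ) = i then v ⟨(p.len - 1) % (p.len - 1 + (q.len - 1)), Nat.mod_lt _ hMpos⟩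
          else v ⟨((k : ℕ) + (p.len - 1) - i) % p.len % (p.len - 1 + (q.len - 1)),
            Nat.mod_lt _ hMpos⟩,
         fun k : Fin q.len =>
          if (k : ℕ) = j then v ⟨0 % (p.len - 1 + (q.len - 1)), Nat.mod_lt _ hMpos⟩
          else v ⟨((p.len - 1) + ((k : ℕ) + (q.len - 1) - j) % q.len) % (p.len - 1 + (q.len - 1)),
            Nat.mod_lt _ hMpos⟩))
      ?_ ?_ ?_ ?_ ?_
    · -- Φ maps into LBox of the concatenated loop
      rintro ⟨u, w⟩ hx
      obtain ⟨hxm, hδ⟩ := Finset.mem_filter.1 hx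
      obtain ⟨hu, hw⟩ := Finset.mem_product.1 hxm
      refine Fintype.mem_piFinset.2 fun r => Finset.mem_range.2 ?_
      show (if (r : ℕ) < p.len - 1 then u ⟨(i + 1 + (r : ℕ)) % p.len, Nat.mod_lt _ hLp⟩
        else w ⟨(j + 1 + ((r : ℕ) - (p.len - 1))) % q.len, Nat.mod_lt _ hLq⟩) <
        nV (dsrc s t (concatSeq s t p q i j (r : ℕ)))
      rcases Nat.lt_or_ge (r : ℕ) (p.len - 1) with hr | hr
      · rw [if_pos hr, concatSeq_lt s t hr, ← p.f_mod s t (i + 1 + (r : ℕ))]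
        exact hbp u hu _
      · rw [if_neg (by omega), concatSeq_ge s t hr r.isLt,
          ← q.f_mod s t (j + 1 + ((r : ℕ) - (p.len - 1)))]
        exact hbq w hw _
    · -- Ψ maps into the filtered product
      intro v hv
      have hbv : ∀ r : Fin (p.len - 1 + (q.len - 1)),
          v r < nV (dsrc s t (concatSeq s t p q i j (r : ℕ))) :=
        fun r => Finset.mem_range.1 (Fintype.mem_piFinset.1 hv r)
      refine Finset.mem_filter.2 ⟨Finset.mem_product.2 ⟨?_, ?_⟩, ?_⟩
      · refine Fintype.mem_piFinset.2 fun k => Finset.mem_range.2 ?_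
        show (if (k : ℕ) = i then v ⟨(p.len - 1) % (p.len - 1 + (q.len - 1)), Nat.mod_lt _ hMpos⟩
          else v ⟨((k : ℕ) + (p.len - 1) - i) % p.len % (p.len - 1 + (q.len - 1)),
            Nat.mod_lt _ hMpos⟩) < nV (dsrc s t (p.f (k : ℕ)))
        by_cases hk : (k : ℕ) = i
        · rw [if_pos hk, hk]
          exact lt_of_lt_of_eq (hbv _) hdΛ
        · rw [if_neg hk]
          obtain ⟨hlt, heq⟩ := hxp1 (k : ℕ) k.isLt hk
          have hmm : ((k : ℕ) + (p.len - 1) - i) % p.len % (p.len - 1 + (q.len - 1)) =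
              ((k : ℕ) + (p.len - 1) - i) % p.len := Nat.mod_eq_of_lt (by omega)
          refine lt_of_lt_of_eq (hbv _) ?_
          show nV (dsrc s t (concatSeq s t p q i j
              (((k : ℕ) + (p.len - 1) - i) % p.len % (p.len - 1 + (q.len - 1))))) =
            nV (dsrc s t (p.f (k : ℕ)))
          rw [hmm, concatSeq_lt s t hlt, ← p.f_mod s t (i + 1 + ((k : ℕ) + (p.len - 1) - i) % p.len),
            heq]
      · refine Fintype.mem_piFinset.2 fun k => Finset.mem_range.2 ?_
        show (if (k : ℕ) = j then v ⟨0 % (p.len - 1 + (q.len - 1)), Nat.mod_lt _ hMpos⟩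
          else v ⟨((p.len - 1) + ((k : ℕ) + (q.len - 1) - j) % q.len) % (p.len - 1 + (q.len - 1)),
            Nat.mod_lt _ hMpos⟩) < nV (dsrc s t (q.f (k : ℕ)))
        by_cases hk : (k : ℕ) = j
        · rw [if_pos hk, hk]
          exact lt_of_lt_of_eq (hbv _) hd0
        · rw [if_neg hk]
          obtain ⟨hlt, heq⟩ := hxq1 (k : ℕ) k.isLt hk
          have hmm : ((p.len - 1) + ((k : ℕ) + (q.len - 1) - j) % q.len) %
              (p.len - 1 + (q.len - 1)) =
              (p.len - 1) + ((k : ℕ) + (q.len - 1) - j) % q.len := Nat.mod_eq_of_lt (by omega)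
          refine lt_of_lt_of_eq (hbv _) ?_
          show nV (dsrc s t (concatSeq s t p q i j
              (((p.len - 1) + ((k : ℕ) + (q.len - 1) - j) % q.len) % (p.len - 1 + (q.len - 1)))))
            = nV (dsrc s t (q.f (k : ℕ)))
          rw [hmm, concatSeq_ge s t (by omega) (by omega), Nat.add_sub_cancel_left,
            ← q.f_mod s t (j + 1 + ((k : ℕ) + (q.len - 1) - j) % q.len), heq]
      · -- the gluing constraint holds for Ψ v
        have hjj : ((⟨j % q.len, Nat.mod_lt _ q.len_pos⟩ : Fin q.len) : ℕ) = j :=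
          Nat.mod_eq_of_lt hj
        have hii : ((⟨i % p.len, Nat.mod_lt _ p.len_pos⟩ : Fin p.len) : ℕ) = i :=
          Nat.mod_eq_of_lt hi
        refine ⟨?_, ?_⟩
        · -- u'((i+1) mod Lp) = w'(j mod Lq)
          show (if (i + 1) % p.len = i
              then v ⟨(p.len - 1) % (p.len - 1 + (q.len - 1)), Nat.mod_lt _ hMpos⟩
              else v ⟨((i + 1) % p.len +
                  (p.len - 1) - i) % p.len % (p.len - 1 + (q.len - 1)), Nat.mod_lt _ hMpos⟩) =
            (if j % q.len = j
              then v ⟨0 % (p.len - 1 + (q.len - 1)), Nat.mod_lt _ hMpos⟩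
              else v ⟨((p.len - 1) + (j % q.len +
                  (q.len - 1) - j) % q.len) % (p.len - 1 + (q.len - 1)), Nat.mod_lt _ hMpos⟩)
          rw [if_pos hjj]
          rcases Nat.lt_or_ge 0 (p.len - 1) with h2 | h2
          · have h0 := hxp2 0 h2
            rw [Nat.add_zero] at h0
            rw [if_neg (show ¬ _ = i from h0.1)]
            exact fapp v (Nat.mod_lt _ hMpos) (Nat.mod_lt _ hMpos) (by rw [h0.2])
          · -- p.len = 1
            have hp1 : p.len = 1 := by omega
            rw [if_pos (show (i + 1) % p.len = i from by rw [hp1, Nat.mod_one]; omega)]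
            exact fapp v (Nat.mod_lt _ hMpos) (Nat.mod_lt _ hMpos)
              (congrArg (· % (p.len - 1 + (q.len - 1))) (by omega))
        · -- u'(i mod Lp) = w'((j+1) mod Lq)
          show (if i % p.len = i
              then v ⟨(p.len - 1) % (p.len - 1 + (q.len - 1)), Nat.mod_lt _ hMpos⟩
              else v ⟨(i % p.len +
                  (p.len - 1) - i) % p.len % (p.len - 1 + (q.len - 1)), Nat.mod_lt _ hMpos⟩) =
            (if (j + 1) % q.len = j
              then v ⟨0 % (p.len - 1 + (q.len - 1)), Nat.mod_lt _ hMpos⟩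
              else v ⟨((p.len - 1) + ((j + 1) % q.len +
                  (q.len - 1) - j) % q.len) % (p.len - 1 + (q.len - 1)), Nat.mod_lt _ hMpos⟩)
          rw [if_pos hii]
          rcases Nat.lt_or_ge 0 (q.len - 1) with h2 | h2
          · have h0 := hxq2 0 h2
            rw [Nat.add_zero] at h0
            rw [if_neg (show ¬ _ = j from h0.1)]
            exact fapp v (Nat.mod_lt _ hMpos) (Nat.mod_lt _ hMpos) (by rw [h0.2, Nat.add_zero])
          · -- q.len = 1
            have hq1 : q.len = 1 := by omega
            rw [if_pos (show (j + 1) % q.len = j from by rw [hq1, Nat.mod_one]; omega)]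
            exact fapp v (Nat.mod_lt _ hMpos) (Nat.mod_lt _ hMpos)
              (by rw [show p.len - 1 + (q.len - 1) = p.len - 1 from by omega, Nat.mod_self,
                Nat.zero_mod])
    · -- left inverse : Ψ (Φ x) = x
      rintro ⟨u, w⟩ hx
      obtain ⟨hxm, hδ⟩ := Finset.mem_filter.1 hx
      have hδ1 : u ⟨(i + 1) % p.len, Nat.mod_lt _ p.len_pos⟩ =
          w ⟨j % q.len, Nat.mod_lt _ q.len_pos⟩ := hδ.1
      have hδ2 : u ⟨i % p.len, Nat.mod_lt _ p.len_pos⟩ =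
          w ⟨(j + 1) % q.len, Nat.mod_lt _ q.len_pos⟩ := hδ.2
      refine Prod.ext ?_ ?_
      · funext k
        show (if (k : ℕ) = i
            then (if ((p.len - 1) % (p.len - 1 + (q.len - 1))) < p.len - 1
              then u ⟨(i + 1 + ((p.len - 1) % (p.len - 1 + (q.len - 1)))) % p.len, Nat.mod_lt _ hLp⟩
              else w ⟨(j + 1 + (((p.len - 1) % (p.len - 1 + (q.len - 1))) - (p.len - 1))) % q.len,
                Nat.mod_lt _ hLq⟩)
            else (if (((k : ℕ) + (p.len - 1) - i) % p.len % (p.len - 1 + (q.len - 1))) < p.len - 1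
              then u ⟨(i + 1 + (((k : ℕ) + (p.len - 1) - i) % p.len % (p.len - 1 + (q.len - 1)))) % p.len,
                Nat.mod_lt _ hLp⟩
              else w ⟨(j + 1 + ((((k : ℕ) + (p.len - 1) - i) % p.len % (p.len - 1 + (q.len - 1))) -
                (p.len - 1))) % q.len, Nat.mod_lt _ hLq⟩)) = u k
        by_cases hk : (k : ℕ) = i
        · rw [if_pos hk]
          rcases Nat.lt_or_ge (p.len - 1) (p.len - 1 + (q.len - 1)) with h2 | h2
          · -- q.len ≥ 2
            rw [Nat.mod_eq_of_lt h2, if_neg (lt_irrefl _),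
              fapp w (Nat.mod_lt _ hLq) (Nat.mod_lt _ hLq)
                (show (j + 1 + (p.len - 1 - (p.len - 1))) % q.len = (j + 1) % q.len by
                  rw [Nat.sub_self, Nat.add_zero]), ← hδ2]
            exact fapp u (Nat.mod_lt _ hLp) k.isLt (by rw [Nat.mod_eq_of_lt hi, hk])
          · -- q.len = 1
            have hq1 : q.len = 1 := by omega
            have h0 : (p.len - 1) % (p.len - 1 + (q.len - 1)) = 0 := by
              rw [show p.len - 1 + (q.len - 1) = p.len - 1 by omega, Nat.mod_self]
            rw [h0, if_pos (by omega),
              fapp u (Nat.mod_lt _ hLp) (Nat.mod_lt _ hLp)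
                (show (i + 1 + 0) % p.len = (i + 1) % p.len by rw [Nat.add_zero]),
              hδ1, fapp w (Nat.mod_lt _ hLq) (Nat.mod_lt _ hLq)
                (show j % q.len = (j + 1) % q.len by rw [hq1, Nat.mod_one, Nat.mod_one]),
              ← hδ2]
            exact fapp u (Nat.mod_lt _ hLp) k.isLt (by rw [Nat.mod_eq_of_lt hi, hk])
        · rw [if_neg hk]
          obtain ⟨hlt, heq⟩ := hxp1 (k : ℕ) k.isLt hk
          have hmm : ((k : ℕ) + (p.len - 1) - i) % p.len % (p.len - 1 + (q.len - 1)) =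
              ((k : ℕ) + (p.len - 1) - i) % p.len := Nat.mod_eq_of_lt (by omega)
          rw [hmm, if_pos hlt]
          exact fapp u (Nat.mod_lt _ hLp) k.isLt heq
      · funext k
        show (if (k : ℕ) = j
            then (if (0 % (p.len - 1 + (q.len - 1))) < p.len - 1
              then u ⟨(i + 1 + (0 % (p.len - 1 + (q.len - 1)))) % p.len, Nat.mod_lt _ hLp⟩
              else w ⟨(j + 1 + ((0 % (p.len - 1 + (q.len - 1))) - (p.len - 1))) % q.len,
                Nat.mod_lt _ hLq⟩)
            else (if ((p.len - 1 + ((k : ℕ) + (q.len - 1) - j) % q.len) % (p.len - 1 + (q.len - 1))) < p.len - 1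
              then u ⟨(i + 1 + ((p.len - 1 + ((k : ℕ) + (q.len - 1) - j) % q.len) % (p.len - 1 + (q.len - 1)))) % p.len,
                Nat.mod_lt _ hLp⟩
              else w ⟨(j + 1 + (((p.len - 1 + ((k : ℕ) + (q.len - 1) - j) % q.len) % (p.len - 1 + (q.len - 1))) -
                (p.len - 1))) % q.len, Nat.mod_lt _ hLq⟩)) = w k
        by_cases hk : (k : ℕ) = j
        · rw [if_pos hk, Nat.zero_mod]
          rcases Nat.lt_or_ge 0 (p.len - 1) with h2 | h2
          · rw [if_pos h2,
              fapp u (Nat.mod_lt _ hLp) (Nat.mod_lt _ hLp)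
                (show (i + 1 + 0) % p.len = (i + 1) % p.len by rw [Nat.add_zero]), hδ1]
            exact fapp w (Nat.mod_lt _ hLq) k.isLt (by rw [Nat.mod_eq_of_lt hj, hk])
          · -- p.len = 1
            have hp1 : p.len = 1 := by omega
            rw [if_neg (by omega),
              fapp w (Nat.mod_lt _ hLq) (Nat.mod_lt _ hLq)
                (show (j + 1 + (0 - (p.len - 1))) % q.len = (j + 1) % q.len by
                  rw [show 0 - (p.len - 1) = 0 by omega, Nat.add_zero]),
              ← hδ2, fapp u (Nat.mod_lt _ hLp) (Nat.mod_lt _ hLp)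
                (show i % p.len = (i + 1) % p.len by rw [hp1, Nat.mod_one, Nat.mod_one]),
              hδ1]
            exact fapp w (Nat.mod_lt _ hLq) k.isLt (by rw [Nat.mod_eq_of_lt hj, hk])
        · rw [if_neg hk]
          obtain ⟨hlt, heq⟩ := hxq1 (k : ℕ) k.isLt hk
          have hmm : (p.len - 1 + ((k : ℕ) + (q.len - 1) - j) % q.len) % (p.len - 1 + (q.len - 1)) =
              p.len - 1 + ((k : ℕ) + (q.len - 1) - j) % q.len := Nat.mod_eq_of_lt (by omega)
          rw [hmm, if_neg (by omega),
            fapp w (Nat.mod_lt _ hLq) (Nat.mod_lt _ hLq)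
              (show (j + 1 + (p.len - 1 + ((k : ℕ) + (q.len - 1) - j) % q.len - (p.len - 1))) % q.len
                = (j + 1 + ((k : ℕ) + (q.len - 1) - j) % q.len) % q.len by
                rw [Nat.add_sub_cancel_left])]
          exact fapp w (Nat.mod_lt _ hLq) k.isLt heq
    · -- right inverse : Φ (Ψ v) = v
      intro v hv
      funext r
      show (if (r : ℕ) < p.len - 1
          then (if (((i + 1 + (r : ℕ)) % p.len) : ℕ) = i
            then v ⟨(p.len - 1) % (p.len - 1 + (q.len - 1)), Nat.mod_lt _ hMpos⟩
            else v ⟨((i + 1 + (r : ℕ)) % p.len + (p.len - 1) - i) % p.len % (p.len - 1 + (q.len - 1)),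
              Nat.mod_lt _ hMpos⟩)
          else (if (((j + 1 + ((r : ℕ) - (p.len - 1))) % q.len) : ℕ) = j
            then v ⟨0 % (p.len - 1 + (q.len - 1)), Nat.mod_lt _ hMpos⟩
            else v ⟨((p.len - 1) + ((j + 1 + ((r : ℕ) - (p.len - 1))) % q.len + (q.len - 1) - j) % q.len) %
              (p.len - 1 + (q.len - 1)), Nat.mod_lt _ hMpos⟩)) = v r
      rcases Nat.lt_or_ge (r : ℕ) (p.len - 1) with hr | hr
      · rw [if_pos hr]
        obtain ⟨hne, heq⟩ := hxp2 (r : ℕ) hr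
        rw [if_neg hne]
        exact fapp v (Nat.mod_lt _ hMpos) r.isLt
          (by rw [heq, Nat.mod_eq_of_lt (show (r : ℕ) < p.len - 1 + (q.len - 1) by omega)])
      · rw [if_neg (by omega)]
        obtain ⟨hne, heq⟩ := hxq2 ((r : ℕ) - (p.len - 1)) (by have := r.isLt; omega)
        rw [if_neg hne]
        exact fapp v (Nat.mod_lt _ hMpos) r.isLt
          (by rw [heq, show p.len - 1 + ((r : ℕ) - (p.len - 1)) = (r : ℕ) by omega,
            Nat.mod_eq_of_lt r.isLt])
    · -- term equality
      rintro ⟨u, w⟩ hx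
      obtain ⟨hxm, hδ⟩ := Finset.mem_filter.1 hx
      exact term_eq s t nV K p q hi hj hM u w hδ.1 hδ.2
        (fun r : Fin (p.len - 1 + (q.len - 1)) =>
          if (r : ℕ) < p.len - 1 then u ⟨(i + 1 + (r : ℕ)) % p.len, Nat.mod_lt _ hLp⟩
          else w ⟨(j + 1 + ((r : ℕ) - (p.len - 1))) % q.len, Nat.mod_lt _ hLq⟩)
        (fun r hr => rfl)

end MainIJ
theorem dpair_srctgt {V E : Type*} [DecidableEq E] (s t : E → V) {d₁ d₂ : E ⊕ E}
    (h : dpair d₁ d₂ ≠ 0) :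
    dsrc s t d₂ = dtgt s t d₁ ∧ dtgt s t d₂ = dsrc s t d₁ := by
  match d₁, d₂ with
  | Sum.inl a, Sum.inl b => exact absurd rfl h
  | Sum.inr a, Sum.inr b => exact absurd rfl h
  | Sum.inl a, Sum.inr b =>
      by_cases hab : a = b
      · subst hab; exact ⟨rfl, rfl⟩
      · exact absurd (by simp [dpair, hab]) h
  | Sum.inr a, Sum.inl b =>
      by_cases hab : a = b
      · subst hab; exact ⟨rfl, rfl⟩
      · exact absurd (by simp [dpair, hab]) h
theorem sum4_swap {α β γ δ M : Type*} [AddCommMonoid M] (sa : Finset α) (sb : Finset β)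
    (sc : Finset γ) (sd : Finset δ) (f : α → β → γ → δ → M) :
    (∑ a ∈ sa, ∑ b ∈ sb, ∑ c ∈ sc, ∑ d ∈ sd, f a b c d) =
      ∑ c ∈ sc, ∑ d ∈ sd, ∑ a ∈ sa, ∑ b ∈ sb, f a b c d :=
  calc ∑ a ∈ sa, ∑ b ∈ sb, ∑ c ∈ sc, ∑ d ∈ sd, f a b c d
      = ∑ a ∈ sa, ∑ c ∈ sc, ∑ b ∈ sb, ∑ d ∈ sd, f a b c d :=
        Finset.sum_congr rfl fun a _ => Finset.sum_comm
    _ = ∑ c ∈ sc, ∑ a ∈ sa, ∑ b ∈ sb, ∑ d ∈ sd, f a b c d := Finset.sum_comm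
    _ = ∑ c ∈ sc, ∑ a ∈ sa, ∑ d ∈ sd, ∑ b ∈ sb, f a b c d :=
        Finset.sum_congr rfl fun c _ => Finset.sum_congr rfl fun a _ => Finset.sum_comm
    _ = ∑ c ∈ sc, ∑ d ∈ sd, ∑ a ∈ sa, ∑ b ∈ sb, f a b c d :=
        Finset.sum_congr rfl fun c _ => Finset.sum_comm

/-- Representation-variety witness of the classical necklace bracket.  Paint each vertex
`i` of the double quiver with a vector space of dimension `nV i` over a field `K` of
characteristic zero, and let `P = {-,-}` be the constant-coefficient Poisson bracket on the
polynomial functions on the representation space, i.e. the antisymmetric biderivation with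
`{x^a_{uv}, x^{ā}_{wz}} = δ_{uz} δ_{vw}` for original arrows `a` and all other brackets of
coordinates zero.  Then the trace function of a closed path depends only on its cyclic
equivalence class, and the (induced) trace map intertwines the necklace bracket `br⁻` with
`P`. -/
theorem stmt_15 {V E : Type*} [DecidableEq E] (s t : E → V) (nV : V → ℕ)
    (K : Type*) [Field K] [CharZero K]
    (P : MvPolynomial (RCoord s t nV) K →ₗ[K] MvPolynomial (RCoord s t nV) K →ₗ[K]
      MvPolynomial (RCoord s t nV) K)
    (hskew : ∀ f g, P f g = - P g f)
    (hder : ∀ f g h, P f (g * h) = g * P f h + P f g * h)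
    (hval : ∀ (a : E) (u : Fin (nV (t a))) (v : Fin (nV (s a)))
        (w : Fin (nV (s a))) (z : Fin (nV (t a))),
      P (MvPolynomial.X ⟨Sum.inl a, (u, v)⟩) (MvPolynomial.X ⟨Sum.inr a, (w, z)⟩) =
        MvPolynomial.C (if u = z ∧ v = w then (1 : K) else 0))
    (hzero : ∀ (d₁ d₂ : E ⊕ E), dpair d₁ d₂ = 0 →
      ∀ (uv : Fin (nV (dtgt s t d₁)) × Fin (nV (dsrc s t d₁)))
        (wz : Fin (nV (dtgt s t d₂)) × Fin (nV (dsrc s t d₂))),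
      P (MvPolynomial.X ⟨d₁, uv⟩) (MvPolynomial.X ⟨d₂, wz⟩) = 0) :
    (∀ p q : RawLoop s t, p.len = q.len → (∃ m, ∀ r, q.f r = p.f (r + m)) →
      trPoly K s t nV p = trPoly K s t nV q) ∧
    (∀ p q : RawLoop s t,
      P (trPoly K s t nV p) (trPoly K s t nV q) =
        ∑ i ∈ Finset.range p.len, ∑ j ∈ Finset.range q.len,
          dpair (p.f i) (q.f j) • brMTermPoly K s t nV p q i j) := by
  constructor
  · rintro p q hL ⟨m, hm⟩
    exact trPoly_rot s t nV K p q hL m hm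
  · intro p q
    have step1 : P (trPoly K s t nV p) (trPoly K s t nV q) =
        ∑ u ∈ LBox s t nV p, ∑ w ∈ LBox s t nV q,
          ∑ i ∈ Finset.range p.len, ∑ j ∈ Finset.range q.len,
            (∏ i' ∈ (Finset.range p.len).erase i, XX s t nV K (p.f i')
                (u ⟨(i' + 1) % p.len, Nat.mod_lt _ p.len_pos⟩)
                (u ⟨i' % p.len, Nat.mod_lt _ p.len_pos⟩)) *
              ((∏ j' ∈ (Finset.range q.len).erase j, XX s t nV K (q.f j')
                  (w ⟨(j' + 1) % q.len, Nat.mod_lt _ q.len_pos⟩)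
                  (w ⟨j' % q.len, Nat.mod_lt _ q.len_pos⟩)) *
                ((dpair (p.f i) (q.f j) : ℤ) • MvPolynomial.C
                  (if u ⟨(i + 1) % p.len, Nat.mod_lt _ p.len_pos⟩ =
                        w ⟨j % q.len, Nat.mod_lt _ q.len_pos⟩ ∧
                      u ⟨i % p.len, Nat.mod_lt _ p.len_pos⟩ =
                        w ⟨(j + 1) % q.len, Nat.mod_lt _ q.len_pos⟩
                    then (1 : K) else 0))) := by
      rw [trPoly_eq, trPoly_eq,
        map_sum P (LTerm s t nV K p) (LBox s t nV p), LinearMap.sum_apply]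
      refine Finset.sum_congr rfl fun u hu => ?_
      rw [map_sum]
      refine Finset.sum_congr rfl fun w hw => ?_
      rw [LTerm, LTerm, P_prod_prod P hskew hder]
      refine Finset.sum_congr rfl fun i hi => Finset.sum_congr rfl fun j hj => ?_
      have hi' : i < p.len := Finset.mem_range.1 hi
      have hj' : j < q.len := Finset.mem_range.1 hj
      have ha : u ⟨(i + 1) % p.len, Nat.mod_lt _ p.len_pos⟩ < nV (dtgt s t (p.f i)) := by
        have := Finset.mem_range.1 (Fintype.mem_piFinset.1 hu
          ⟨(i + 1) % p.len, Nat.mod_lt _ p.len_pos⟩)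
        exact lt_of_lt_of_eq this (RawLoop.closed' s t p nV i)
      have hb : u ⟨i % p.len, Nat.mod_lt _ p.len_pos⟩ < nV (dsrc s t (p.f i)) := by
        have := Finset.mem_range.1 (Fintype.mem_piFinset.1 hu
          ⟨i % p.len, Nat.mod_lt _ p.len_pos⟩)
        exact lt_of_lt_of_eq this (RawLoop.n_mod s t p nV i)
      have ha' : w ⟨(j + 1) % q.len, Nat.mod_lt _ q.len_pos⟩ < nV (dtgt s t (q.f j)) := by
        have := Finset.mem_range.1 (Fintype.mem_piFinset.1 hw
          ⟨(j + 1) % q.len, Nat.mod_lt _ q.len_pos⟩)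
        exact lt_of_lt_of_eq this (RawLoop.closed' s t q nV j)
      have hb' : w ⟨j % q.len, Nat.mod_lt _ q.len_pos⟩ < nV (dsrc s t (q.f j)) := by
        have := Finset.mem_range.1 (Fintype.mem_piFinset.1 hw
          ⟨j % q.len, Nat.mod_lt _ q.len_pos⟩)
        exact lt_of_lt_of_eq this (RawLoop.n_mod s t q nV j)
      rw [PXXval P hskew hval hzero (p.f i) (q.f j) ha hb ha' hb']
    rw [step1, sum4_swap (LBox s t nV p) (LBox s t nV q) (Finset.range p.len)
      (Finset.range q.len)]
    refine Finset.sum_congr rfl fun i hi => Finset.sum_congr rfl fun j hj => ?_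
    have hi' : i < p.len := Finset.mem_range.1 hi
    have hj' : j < q.len := Finset.mem_range.1 hj
    simp only [mul_smul_comm, ← Finset.smul_sum]
    by_cases hz : dpair (p.f i) (q.f j) = 0
    · rw [hz, zero_smul, zero_smul]
    · obtain ⟨hST, hTS⟩ := dpair_srctgt s t hz
      rw [main_ij s t nV K p q hi' hj' hST hTS]
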